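/- Let A be a commutative unital associative ℝ-algebra with involution and let I be an ideal of A. Then rr(I) = {a ∈ A : −(a*a)^k ∈ Σ_A + I + I* for some integer k ≥ 1} = {a ∈ A : −(a*a)^k ∈ Σ_A + I for some integer k ≥ 1}. -/

import Mathlib

noncomputable section

/-- `Σ_A`: the set of finite sums of elements `a*a`. -/
def SigmaSet (A : Type) [Ring A] [StarRing A] : Set A :=
  {s | ∃ (r : ℕ) (b : Fin r → A), s = ∑ i, star (b i) * b i}

/-- An ideal `I` is real if whenever `∑ᵢ aᵢ* aᵢ ∈ I + I*`, every `aᵢ ∈ I`. -/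
def IsRealStar (A : Type) [Ring A] [StarRing A] (I : Submodule A A) : Prop :=
  ∀ (r : ℕ) (a : Fin r → A),
    (∃ u ∈ I, ∃ w ∈ I, (∑ i, star (a i) * a i) = u + star w) → ∀ i, a i ∈ I

/-- The real radical: the smallest real ideal containing `I`. -/
def rrStar (A : Type) [Ring A] [StarRing A] (I : Submodule A A) : Submodule A A :=
  sInf {J | IsRealStar A J ∧ I ≤ J}

namespace Stmt18Aux

variable {A : Type} [CommRing A] [Algebra ℝ A] [StarRing A] [StarModule ℝ A]

lemma sigma_zero : (0 : A) ∈ SigmaSet A := ⟨0, ![], by simp⟩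

lemma sigma_single (b : A) : star b * b ∈ SigmaSet A := ⟨1, ![b], by simp⟩

lemma sigma_add {x y : A} (hx : x ∈ SigmaSet A) (hy : y ∈ SigmaSet A) :
    x + y ∈ SigmaSet A := by
  obtain ⟨r, b, rfl⟩ := hx
  obtain ⟨r', b', rfl⟩ := hy
  refine ⟨r + r', Fin.append b b', ?_⟩
  rw [Fin.sum_univ_add]
  simp

lemma sigma_sum {ι : Type*} (t : Finset ι) (f : ι → A)
    (h : ∀ i ∈ t, f i ∈ SigmaSet A) : ∑ i ∈ t, f i ∈ SigmaSet A := by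
  classical
  induction t using Finset.induction_on with
  | empty => simpa using sigma_zero
  | insert _ _ hni ih =>
    rw [Finset.sum_insert hni]
    exact sigma_add (h _ (Finset.mem_insert_self _ _))
      (ih fun i hi => h i (Finset.mem_insert_of_mem hi))

lemma sigma_smul_mul (c : A) {x : A} (hx : x ∈ SigmaSet A) :
    (star c * c) * x ∈ SigmaSet A := by
  obtain ⟨r, b, rfl⟩ := hx
  refine ⟨r, fun i => c * b i, ?_⟩
  rw [Finset.mul_sum]
  refine Finset.sum_congr rfl fun i _ => ?_
  rw [star_mul']
  ring

lemma sigma_mul {x y : A} (hx : x ∈ SigmaSet A) (hy : y ∈ SigmaSet A) :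
    x * y ∈ SigmaSet A := by
  obtain ⟨r, b, rfl⟩ := hx
  rw [Finset.sum_mul]
  exact sigma_sum _ _ fun i _ => sigma_smul_mul (b i) hy

lemma sigma_pow {x : A} (hx : x ∈ SigmaSet A) (n : ℕ) : x ^ n ∈ SigmaSet A := by
  induction n with
  | zero => simpa using sigma_single (1 : A)
  | succ n ih => rw [pow_succ]; exact sigma_mul ih hx

lemma sigma_quarter {x : A} (hx : x ∈ SigmaSet A) :
    (1/4 : ℝ) • x ∈ SigmaSet A := by
  obtain ⟨r, b, rfl⟩ := hx
  refine ⟨r, fun i => (1/2 : ℝ) • b i, ?_⟩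
  rw [Finset.smul_sum]
  refine Finset.sum_congr rfl fun i _ => ?_
  rw [star_smul, star_trivial ((1/2 : ℝ)), smul_mul_smul_comm]
  norm_num

/-- The cone `Σ_A + I`. -/
def MS (I : Ideal A) : Set A := {m | ∃ s ∈ SigmaSet A, ∃ u ∈ I, m = s + u}

lemma M_zero (I : Ideal A) : (0 : A) ∈ MS I := ⟨0, sigma_zero, 0, I.zero_mem, by simp⟩

lemma M_of_sigma {I : Ideal A} {s : A} (hs : s ∈ SigmaSet A) : s ∈ MS I :=
  ⟨s, hs, 0, I.zero_mem, by simp⟩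

lemma M_add {I : Ideal A} {x y : A} (hx : x ∈ MS I) (hy : y ∈ MS I) :
    x + y ∈ MS I := by
  obtain ⟨s, hs, u, hu, rfl⟩ := hx
  obtain ⟨t, ht, v, hv, rfl⟩ := hy
  exact ⟨s + t, sigma_add hs ht, u + v, I.add_mem hu hv, by ring⟩

lemma M_sum {I : Ideal A} {ι : Type*} (t : Finset ι) (f : ι → A)
    (h : ∀ i ∈ t, f i ∈ MS I) : ∑ i ∈ t, f i ∈ MS I := by
  classical
  induction t using Finset.induction_on with
  | empty => simpa using M_zero I
  | insert _ _ hni ih =>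
    rw [Finset.sum_insert hni]
    exact M_add (h _ (Finset.mem_insert_self _ _))
      (ih fun i hi => h i (Finset.mem_insert_of_mem hi))

lemma M_sigma_mul {I : Ideal A} {σ m : A} (hσ : σ ∈ SigmaSet A) (hm : m ∈ MS I) :
    σ * m ∈ MS I := by
  obtain ⟨s, hs, u, hu, rfl⟩ := hm
  exact ⟨σ * s, sigma_mul hσ hs, σ * u, I.mul_mem_left σ hu, by ring⟩

lemma M_quarter {I : Ideal A} {m : A} (hm : m ∈ MS I) : (1/4 : ℝ) • m ∈ MS I := by
  obtain ⟨s, hs, u, hu, rfl⟩ := hm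
  refine ⟨(1/4 : ℝ) • s, sigma_quarter hs, (1/4 : ℝ) • u, ?_, by rw [smul_add]⟩
  rw [Algebra.smul_def]
  exact I.mul_mem_left _ hu

/-- Key lemma A: if `-(a* a)^k ∈ Σ + I`, then `(a* a)^k · c ∈ Σ + I`
for every self-adjoint `c`. -/
lemma lemA {I : Ideal A} (a : A) {k : ℕ}
    (h : -((star a * a) ^ k) ∈ MS I) {c : A} (hc : star c = c) :
    (star a * a) ^ k * c ∈ MS I := by
  have key : (4 : ℝ) • ((star a * a) ^ k * c) =
      (star (a ^ k * (c + 1)) * (a ^ k * (c + 1))) +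
        (-((star a * a) ^ k)) * ((c - 1) * (c - 1)) := by
    rw [Algebra.smul_def, map_ofNat, star_mul', star_add, star_one, hc, star_pow]
    ring
  have h2 : ((star a * a) ^ k * c) = (1/4 : ℝ) • ((4 : ℝ) • ((star a * a) ^ k * c)) := by
    rw [smul_smul]; norm_num
  rw [h2, key]
  refine M_quarter (M_add (M_of_sigma (sigma_single _)) ?_)
  have hsq : (c - 1) * (c - 1) ∈ SigmaSet A := by
    have : star (c - 1) = c - 1 := by rw [star_sub, hc, star_one]
    simpa [this] using sigma_single (c - 1)
  have : (-((star a * a) ^ k)) * ((c - 1) * (c - 1)) =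
      ((c - 1) * (c - 1)) * (-((star a * a) ^ k)) := by ring
  rw [this]
  exact M_sigma_mul hsq h

lemma star_aa (a : A) : star (star a * a) = star a * a := by
  rw [star_mul', star_star, mul_comm]

lemma lemA' {I : Ideal A} (a : A) {k j : ℕ} (hkj : k ≤ j)
    (h : -((star a * a) ^ k) ∈ MS I) {c : A} (hc : star c = c) :
    (star a * a) ^ j * c ∈ MS I := by
  have e : (star a * a) ^ j * c = (star a * a) ^ k * ((star a * a) ^ (j - k) * c) := by
    rw [← mul_assoc, ← pow_add]
    congr 2
    omega
  rw [e]
  exact lemA a h (by rw [star_mul', star_pow, star_aa, hc, mul_comm])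

/-- Domination: if `Z ∈ Σ` and `S - Z ∈ Σ` then `S^N - Z^N ∈ Σ`. -/
lemma dom {Z S : A} (hZ : Z ∈ SigmaSet A) (hW : S - Z ∈ SigmaSet A) (N : ℕ) :
    S ^ N - Z ^ N ∈ SigmaSet A := by
  have hS : S ∈ SigmaSet A := by
    have := sigma_add hW hZ
    simpa using this
  rw [← geom_sum₂_mul S Z N]
  exact sigma_mul (sigma_sum _ _ fun i _ => sigma_mul (sigma_pow hS _) (sigma_pow hZ _)) hW

/-- The candidate real radical as a submodule. -/
def QS (I : Ideal A) : Submodule A A where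
  carrier := {a | ∃ k : ℕ, 1 ≤ k ∧ -((star a * a) ^ k) ∈ MS I}
  zero_mem' := ⟨1, le_refl 1, by simpa using M_zero I⟩
  add_mem' := by
    rintro a b ⟨k, hk, ha⟩ ⟨l, hl, hb⟩
    set X := star a * a with hX
    set Y := star b * b with hYdef
    have hXsa : star X = X := star_aa a
    have hYsa : star Y = Y := star_aa b
    set N := k + l - 1 with hN
    refine ⟨N, by omega, ?_⟩
    set Z := star (a + b) * (a + b) with hZdef
    set S := (2 : A) * (X + Y) with hSdef
    have hWZ : S - Z = star (a - b) * (a - b) := by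
      rw [hSdef, hZdef, hX, hYdef, star_add, star_sub]
      ring
    -- Step 1 : -(S^N) ∈ M
    have hSN : -(S ^ N) ∈ MS I := by
      have hS : -(S ^ N) = ∑ i ∈ Finset.range (N + 1),
          X ^ i * (Y ^ (N - i) * (-((N.choose i : A) * 2 ^ N))) := by
        rw [hSdef, mul_pow, add_pow, Finset.mul_sum, ← Finset.sum_neg_distrib]
        exact Finset.sum_congr rfl fun i _ => by ring
      rw [hS]
      refine M_sum _ _ fun i hi => ?_
      rw [Finset.mem_range] at hi
      by_cases hik : k ≤ i
      · refine lemA' a hik ha ?_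
        rw [star_mul', star_pow, hYsa, star_neg, star_mul', star_natCast, star_pow,
          star_ofNat, mul_comm]
      · have hil : l ≤ N - i := by omega
        have e : X ^ i * (Y ^ (N - i) * (-((N.choose i : A) * 2 ^ N))) =
            Y ^ (N - i) * (X ^ i * (-((N.choose i : A) * 2 ^ N))) := by ring
        rw [e]
        refine lemA' b hil hb ?_
        rw [star_mul', star_pow, hXsa, star_neg, star_mul', star_natCast, star_pow,
          star_ofNat, mul_comm]
    -- Step 2 : S^N - Z^N ∈ Σ
    have hdiff : S ^ N - Z ^ N ∈ SigmaSet A := by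
      refine dom ?_ ?_ N
      · exact sigma_single (a + b)
      · rw [hWZ]; exact sigma_single (a - b)
    have e : -(Z ^ N) = -(S ^ N) + (S ^ N - Z ^ N) := by ring
    show -(Z ^ N) ∈ MS I
    rw [e]
    exact M_add hSN (M_of_sigma hdiff)
  smul_mem' := by
    rintro c a ⟨k, hk, h⟩
    refine ⟨k, hk, ?_⟩
    have e : -((star (c • a) * (c • a)) ^ k) =
        (star c * c) ^ k * (-((star a * a) ^ k)) := by
      rw [smul_eq_mul, star_mul']
      ring
    rw [e]
    exact M_sigma_mul (sigma_pow (sigma_single c) k) h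

lemma mem_QS {I : Ideal A} {a : A} :
    a ∈ QS I ↔ ∃ k : ℕ, 1 ≤ k ∧ -((star a * a) ^ k) ∈ MS I := Iff.rfl

lemma QS_star {I : Ideal A} {w : A} (hw : w ∈ QS I) : star w ∈ QS I := by
  obtain ⟨k, hk, h⟩ := hw
  refine ⟨k, hk, ?_⟩
  have e : star (star w) * star w = star w * w := by rw [star_star, mul_comm]
  rw [e]
  exact h

lemma I_le_QS (I : Ideal A) : I ≤ QS I := by
  intro a ha
  refine ⟨1, le_refl 1, 0, sigma_zero, -(star a * a), I.neg_mem (I.mul_mem_left _ ha), by simp⟩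

lemma QS_real (I : Ideal A) : IsRealStar A (QS I) := by
  rintro r a ⟨u, hu, w, hw, heq⟩ i
  set F := ∑ j, star (a j) * a j with hF
  have hFQ : F ∈ QS I := by
    rw [heq]
    exact (QS I).add_mem hu (QS_star hw)
  have hFsa : star F = F := by
    rw [hF, star_sum]
    exact Finset.sum_congr rfl fun j _ => star_aa (a j)
  obtain ⟨m, hm, hFm⟩ := hFQ
  have key : -(F ^ (2 * m)) ∈ MS I := by
    have e : (star F * F) ^ m = F ^ (2 * m) := by
      rw [hFsa, ← sq, ← pow_mul]
    rwa [e] at hFm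
  have hFX : F - star (a i) * a i ∈ SigmaSet A := by
    rw [hF, ← Finset.sum_erase_add Finset.univ _ (Finset.mem_univ i), add_sub_cancel_right]
    exact sigma_sum _ _ fun j _ => sigma_single (a j)
  refine ⟨2 * m, by omega, ?_⟩
  have e : -((star (a i) * a i) ^ (2 * m)) =
      -(F ^ (2 * m)) + (F ^ (2 * m) - (star (a i) * a i) ^ (2 * m)) := by ring
  rw [e]
  exact M_add key (M_of_sigma (dom (sigma_single (a i)) hFX (2 * m)))

/-- Lemma B: in a real ideal, `(a* a)^n ∈ J` implies `a ∈ J`. -/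
lemma lemB (J : Submodule A A) (hJ : IsRealStar A J) (a : A) :
    ∀ n : ℕ, 1 ≤ n → (star a * a) ^ n ∈ J → a ∈ J := by
  intro n
  induction n using Nat.strong_induction_on with
  | _ n ih =>
    intro hn h
    rcases eq_or_lt_of_le hn with h1 | h2
    · -- n = 1
      have hn1 : n = 1 := h1.symm
      subst hn1
      simpa using hJ 1 ![a] ⟨(star a * a) ^ 1, h, 0, J.zero_mem, by simp⟩ 0
    · -- n ≥ 2
      set x := star a * a with hx
      set p := (n + 1) / 2 with hp
      have hp1 : 1 ≤ p := by omega
      have hpn : p < n := by omega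
      have h2p : n ≤ 2 * p := by omega
      have hx2p : x ^ (2 * p) ∈ J := by
        have e : x ^ (2 * p) = x ^ (2 * p - n) * x ^ n := by
          rw [← pow_add]; congr 1; omega
        rw [e]
        exact Submodule.smul_mem J _ h
      have hxsa : star x = x := star_aa a
      have hxp : x ^ p ∈ J := by
        have key := hJ 1 ![x ^ p] ⟨x ^ (2 * p), hx2p, 0, J.zero_mem, ?_⟩ 0
        · simpa using key
        · simp only [Fin.sum_univ_one, Matrix.cons_val_zero, star_zero, add_zero,
            star_pow, hxsa, ← pow_add, two_mul]
      exact ih p hpn hp1 hxp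

end Stmt18Aux

open Stmt18Aux in
theorem stmt18 (A : Type) [CommRing A] [Algebra ℝ A] [StarRing A] [StarModule ℝ A]
    (I : Ideal A) :
    (∀ a : A, a ∈ rrStar A I ↔
      ∃ k : ℕ, 1 ≤ k ∧ ∃ s ∈ SigmaSet A, ∃ u ∈ I, ∃ w ∈ I,
        -((star a * a) ^ k) = s + u + star w) ∧
    (∀ a : A, a ∈ rrStar A I ↔
      ∃ k : ℕ, 1 ≤ k ∧ ∃ s ∈ SigmaSet A, ∃ u ∈ I,
        -((star a * a) ^ k) = s + u) := by
  classical
  have hrrQ : rrStar A I ≤ QS I := sInf_le ⟨QS_real I, I_le_QS I⟩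
  have hPrr : ∀ a : A, (∃ k : ℕ, 1 ≤ k ∧ ∃ s ∈ SigmaSet A, ∃ u ∈ I, ∃ w ∈ I,
      -((star a * a) ^ k) = s + u + star w) → a ∈ rrStar A I := by
    rintro a ⟨k, hk, s, hs, u, hu, w, hw, he⟩
    rw [rrStar, Submodule.mem_sInf]
    rintro J ⟨hJreal, hIJ⟩
    obtain ⟨r, b, rfl⟩ := hs
    have h1 : ∀ i, (Fin.cons (a ^ k) b : Fin (r + 1) → A) i ∈ J := by
      refine hJreal (r + 1) _ ⟨-u, J.neg_mem (hIJ hu), -w, J.neg_mem (hIJ hw), ?_⟩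
      simp only [Fin.sum_univ_succ, Fin.cons_zero, Fin.cons_succ, star_neg,
        star_pow, ← mul_pow]
      linear_combination -he
    have hak : a ^ k ∈ J := by simpa using h1 0
    have hxk : (star a * a) ^ k ∈ J := by
      rw [mul_pow]
      exact Submodule.smul_mem J _ hak
    exact lemB J hJreal a k hk hxk
  have hQP : ∀ a : A, a ∈ QS I → ∃ k : ℕ, 1 ≤ k ∧ ∃ s ∈ SigmaSet A, ∃ u ∈ I, ∃ w ∈ I,
      -((star a * a) ^ k) = s + u + star w := by
    rintro a ⟨k, hk, s, hs, u, hu, he⟩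
    exact ⟨k, hk, s, hs, u, hu, 0, I.zero_mem, by rw [he]; simp⟩
  refine ⟨fun a => ⟨fun h => hQP a (hrrQ h), hPrr a⟩,
    fun a => ⟨fun h => hrrQ h, ?_⟩⟩
  rintro ⟨k, hk, s, hs, u, hu, he⟩
  exact hPrr a ⟨k, hk, s, hs, u, hu, 0, I.zero_mem, by rw [he]; simp⟩

end
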